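/- Let M be a finitely generated free abelian group, M_R = M ⊗ ℝ, and σ a convex cone in M_R containing 0. Then the quotient group M / Z(σ ∩ M) is torsion-free, where Z(σ ∩ M) is the subgroup of M generated by σ ∩ M. -/

import Mathlib

/-- For a convex cone `σ ⊆ ℝ^d` containing `0`, the quotient of `ℤ^d` by the subgroup
generated by the lattice points of `σ` is torsion-free. -/
theorem quotient_by_cone_lattice_torsionFree {d : ℕ} (σ : Set (Fin d → ℝ))
    (hcone : ∀ x ∈ σ, ∀ t : ℝ, 0 < t → t • x ∈ σ) (hconv : Convex ℝ σ)
    (h0 : (0 : Fin d → ℝ) ∈ σ) :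
    ∀ (y : (Fin d → ℤ) ⧸ AddSubgroup.closure {m : Fin d → ℤ | (fun i => (m i : ℝ)) ∈ σ})
      (n : ℕ), 0 < n → n • y = 0 → y = 0 := by
  set S : Set (Fin d → ℤ) := {m : Fin d → ℤ | (fun i => (m i : ℝ)) ∈ σ} with hSdef
  intro y n hn hny
  have hS0 : (0 : Fin d → ℤ) ∈ S := by
    show (fun i => ((0 : Fin d → ℤ) i : ℝ)) ∈ σ
    convert h0 using 1
    funext i; simp
  have hSadd : ∀ a ∈ S, ∀ b ∈ S, a + b ∈ S := by
    intro a ha b hb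
    have hmid : (1/2 : ℝ) • (fun i => (a i : ℝ)) + (1/2 : ℝ) • (fun i => (b i : ℝ)) ∈ σ :=
      hconv ha hb (by norm_num) (by norm_num) (by norm_num)
    have h2 := hcone _ hmid 2 (by norm_num)
    show (fun i => ((a + b) i : ℝ)) ∈ σ
    convert h2 using 1
    funext i
    simp [Pi.add_apply, Pi.smul_apply, smul_eq_mul]
    ring
  have hSnsmul : ∀ (k : ℕ), ∀ b ∈ S, k • b ∈ S := by
    intro k b hb
    induction k with
    | zero => simpa using hS0
    | succ k ih =>
      rw [succ_nsmul]
      exact hSadd _ ih _ hb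
  have hsat : ∀ (m : Fin d → ℤ) (k : ℕ), 0 < k → k • m ∈ S → m ∈ S := by
    intro m k hk hkm
    have h := hcone _ hkm (1/(k:ℝ)) (by positivity)
    show (fun i => (m i : ℝ)) ∈ σ
    convert h using 1
    funext i
    simp [Pi.smul_apply, smul_eq_mul]
    field_simp
  have hmem : ∀ x ∈ AddSubgroup.closure S, ∃ a ∈ S, ∃ b ∈ S, x = a - b := by
    intro x hx
    induction hx using AddSubgroup.closure_induction with
    | mem z hz => exact ⟨z, hz, 0, hS0, by simp⟩
    | zero => exact ⟨0, hS0, 0, hS0, by simp⟩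
    | add z w _ _ hz hw =>
      obtain ⟨a, ha, b, hb, rfl⟩ := hz
      obtain ⟨c, hc, e, he, rfl⟩ := hw
      exact ⟨a + c, hSadd _ ha _ hc, b + e, hSadd _ hb _ he, by abel⟩
    | neg z _ hz =>
      obtain ⟨a, ha, b, hb, rfl⟩ := hz
      exact ⟨b, hb, a, ha, by abel⟩
  obtain ⟨k, rfl⟩ : ∃ k, n = k + 1 := ⟨n - 1, by omega⟩
  obtain ⟨m, hm⟩ := QuotientAddGroup.mk'_surjective (AddSubgroup.closure S) y
  rw [← hm] at hny ⊢
  have hmk : (QuotientAddGroup.mk' (AddSubgroup.closure S)) ((k + 1) • m) = 0 := by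
    rw [map_nsmul]; exact hny
  have hmn : (k + 1) • m ∈ AddSubgroup.closure S :=
    (QuotientAddGroup.eq_zero_iff _).mp hmk
  obtain ⟨a, ha, b, hb, heq⟩ := hmem _ hmn
  have hmb : m + b ∈ S := by
    refine hsat _ (k + 1) (by omega) ?_
    have hrw : (k + 1) • (m + b) = a + k • b := by
      funext i
      have hi := congrFun heq i
      simp only [Pi.smul_apply, Pi.add_apply, Pi.sub_apply, smul_eq_mul] at hi ⊢
      linear_combination hi
    rw [hrw]
    exact hSadd _ ha _ (hSnsmul k _ hb)
  have hmG : m ∈ AddSubgroup.closure S := by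
    have h1 : m + b ∈ AddSubgroup.closure S := AddSubgroup.subset_closure hmb
    have h2 : b ∈ AddSubgroup.closure S := AddSubgroup.subset_closure hb
    simpa using AddSubgroup.sub_mem _ h1 h2
  exact (QuotientAddGroup.eq_zero_iff _).mpr hmG
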